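/- Let G be the k-connected path on n nodes with k ≤ √n. Then the second smallest eigenvalue of its normalized Laplacian satisfies λ_{n−1}(L) = Θ(k²/n²); in particular, the Cheeger constant of G satisfies h_G = Ω(k/n). -/

import Mathlib

open Matrix

/-- Adjacency matrix of the k-connected path on n nodes: nodes `i ≠ j` are
joined when they are at distance at most `k` along the path. -/
def pathAdj (n k : ℕ) : Matrix (Fin n) (Fin n) ℝ :=
  Matrix.of fun i j =>
    if i ≠ j ∧ (i.val : ℤ) - j.val ≤ k ∧ (j.val : ℤ) - i.val ≤ k then 1 else 0

/-- Degree of node i in the k-connected path. -/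
def pathDeg (n k : ℕ) (i : Fin n) : ℝ := ∑ j, pathAdj n k i j

/-- Normalized Laplacian `L = I − D^{−1/2} A D^{−1/2}` of the k-connected path. -/
noncomputable def pathLap (n k : ℕ) : Matrix (Fin n) (Fin n) ℝ :=
  Matrix.of fun i j =>
    (if i = j then (1 : ℝ) else 0) -
      pathAdj n k i j / (Real.sqrt (pathDeg n k i) * Real.sqrt (pathDeg n k j))

/-- Second smallest eigenvalue `λ_{n−1}(L)` of the normalized Laplacian of the
k-connected path, via the variational characterization over the orthogonal
complement of `D^{1/2}𝟙`. -/
noncomputable def pathLamSecond (n k : ℕ) : ℝ :=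
  sInf {r | ∃ x : Fin n → ℝ, x ≠ 0 ∧ (∑ i, x i * Real.sqrt (pathDeg n k i)) = 0 ∧
    r = (∑ i, x i * ((pathLap n k).mulVec x) i) / ∑ i, x i ^ 2}

/-- Cheeger constant `h_G = min_S |E(S,Sᶜ)| / min{vol(S), vol(Sᶜ)}` of the
k-connected path. -/
noncomputable def pathCheeger (n k : ℕ) : ℝ :=
  sInf {r | ∃ S : Finset (Fin n), S.Nonempty ∧ Sᶜ.Nonempty ∧
    r = (∑ i ∈ S, ∑ j ∈ Sᶜ, pathAdj n k i j) /
      min (∑ i ∈ S, pathDeg n k i) (∑ i ∈ Sᶜ, pathDeg n k i)}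


open Finset

namespace KPath

/-- pair-variance identity -/
lemma pair_var (F : Finset ℕ) (f : ℕ → ℝ) :
    ∑ i ∈ F, ∑ j ∈ F, (f i - f j)^2
      = 2 * ((F.card : ℝ) * ∑ i ∈ F, (f i)^2 - (∑ i ∈ F, f i)^2) := by
  have h : ∀ i ∈ F, ∑ j ∈ F, (f i - f j)^2
      = (F.card : ℝ) * (f i)^2 - 2 * f i * (∑ j ∈ F, f j) + ∑ j ∈ F, (f j)^2 := by
    intro i _
    rw [Finset.sum_congr rfl (fun j _ => by ring :
      ∀ j ∈ F, (f i - f j)^2 = (f i)^2 - 2 * f i * f j + (f j)^2)]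
    rw [Finset.sum_add_distrib, Finset.sum_sub_distrib, Finset.sum_const, ← Finset.mul_sum]
    push_cast; ring
  rw [Finset.sum_congr rfl h, Finset.sum_add_distrib, Finset.sum_sub_distrib,
    ← Finset.mul_sum, ← Finset.sum_mul, Finset.sum_const]
  rw [show (∑ x ∈ F, 2 * f x) = 2 * ∑ x ∈ F, f x from by rw [Finset.mul_sum]]
  push_cast; ring

end KPath

namespace KPath2
open KPath

/-- energy: sum over edges (hops 1..k) of squared differences -/
noncomputable def Qz (n k : ℕ) (z : ℕ → ℝ) : ℝ :=
  ∑ i ∈ range n, ∑ s ∈ range k, if i + s + 1 < n then (z i - z (i+s+1))^2 else 0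

noncomputable def Sw (k : ℕ) (z : ℕ → ℝ) (t : ℕ) : ℝ := ∑ i ∈ Icc t (t+k), z i
noncomputable def muw (k : ℕ) (z : ℕ → ℝ) (t : ℕ) : ℝ := Sw k z t / (k+1)
noncomputable def Vw (k : ℕ) (z : ℕ → ℝ) (t : ℕ) : ℝ := ∑ i ∈ Icc t (t+k), (z i - muw k z t)^2

lemma Qz_nonneg (n k : ℕ) (z : ℕ → ℝ) : 0 ≤ Qz n k z := by
  apply Finset.sum_nonneg; intro i _; apply Finset.sum_nonneg; intro s _
  split <;> positivity

lemma Vw_nonneg (k : ℕ) (z : ℕ → ℝ) (t : ℕ) : 0 ≤ Vw k z t := by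
  apply Finset.sum_nonneg; intro i _; positivity

lemma card_win (k t : ℕ) : (Icc t (t+k)).card = k + 1 := by
  rw [Nat.card_Icc]; omega

lemma Vw_eq (k : ℕ) (z : ℕ → ℝ) (t : ℕ) :
    Vw k z t = (∑ i ∈ Icc t (t+k), (z i)^2) - (Sw k z t)^2 / (k+1) := by
  have hK : ((k:ℝ)+1) ≠ 0 := by positivity
  unfold Vw muw
  rw [Finset.sum_congr rfl (fun i _ => by ring :
    ∀ i ∈ Icc t (t+k), (z i - Sw k z t / (k+1))^2
      = (z i)^2 - 2 * (Sw k z t / (k+1)) * z i + (Sw k z t / (k+1))^2)]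
  rw [Finset.sum_add_distrib, Finset.sum_sub_distrib, ← Finset.mul_sum, Finset.sum_const,
    card_win]
  rw [show ∑ i ∈ Icc t (t+k), z i = Sw k z t from rfl]
  push_cast
  rw [nsmul_eq_mul]; push_cast
  field_simp
  ring

lemma window_pair_eq (k : ℕ) (z : ℕ → ℝ) (t : ℕ) :
    2 * ((k:ℝ)+1) * Vw k z t
      = ∑ i ∈ Icc t (t+k), ∑ j ∈ Icc t (t+k), (z i - z j)^2 := by
  rw [pair_var, Vw_eq, card_win]
  have hK : ((k:ℝ)+1) ≠ 0 := by positivity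
  simp only [Sw]
  push_cast
  field_simp

lemma sym_split (F : Finset ℕ) (g : ℕ → ℕ → ℝ) (hsym : ∀ i j, g i j = g j i)
    (hdiag : ∀ i, g i i = 0) :
    ∑ i ∈ F, ∑ j ∈ F, g i j = 2 * ∑ i ∈ F, ∑ j ∈ F, (if i < j then g i j else 0) := by
  have split : ∀ i ∈ F, ∑ j ∈ F, g i j
      = (∑ j ∈ F, (if i < j then g i j else 0)) + ∑ j ∈ F, (if j < i then g i j else 0) := by
    intro i _
    rw [← Finset.sum_add_distrib]
    apply Finset.sum_congr rfl
    intro j _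
    rcases lt_trichotomy i j with h | h | h
    · simp [h, not_lt.mpr (le_of_lt h)]
    · simp [h, hdiag]
    · simp [h, not_lt.mpr (le_of_lt h)]
  rw [Finset.sum_congr rfl split, Finset.sum_add_distrib]
  have : ∑ i ∈ F, ∑ j ∈ F, (if j < i then g i j else 0)
      = ∑ i ∈ F, ∑ j ∈ F, (if i < j then g i j else 0) := by
    rw [Finset.sum_comm]
    apply Finset.sum_congr rfl; intro j _
    apply Finset.sum_congr rfl; intro i _
    rw [hsym]
  rw [this]; ring

lemma extend_range (m k : ℕ) (hmk : m ≤ k) (h : ℕ → ℝ) :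
    ∑ s ∈ range m, h s = ∑ s ∈ range k, (if s < m then h s else 0) := by
  rw [← Finset.sum_filter]
  apply Finset.sum_congr _ (fun _ _ => rfl)
  ext s; simp; omega

lemma window_inner (k t i : ℕ) (hti : t ≤ i) (z : ℕ → ℝ) :
    ∑ j ∈ Icc t (t+k), (if i < j then (z i - z j)^2 else 0)
      = ∑ s ∈ range k, (if i + s + 1 ≤ t + k then (z i - z (i+s+1))^2 else 0) := by
  rw [← Finset.sum_filter]
  have hIcc : (Icc t (t+k)).filter (fun j => i < j) = Ico (i+1) (t+k+1) := by
    ext j; simp; omega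
  rw [hIcc, Finset.sum_Ico_eq_sum_range]
  have hm : t + k + 1 - (i+1) ≤ k := by omega
  rw [extend_range _ k hm]
  apply Finset.sum_congr rfl
  intro s _
  have : s < t + k + 1 - (i+1) ↔ i + s + 1 ≤ t + k := by omega
  simp only [this]
  split
  · congr 3 <;> omega
  · rfl

lemma sum_V_le_Q (n k : ℕ) (z : ℕ → ℝ) :
    ∑ t ∈ range (n-k), Vw k z t ≤ Qz n k z := by
  have hKpos : (0:ℝ) < 2*((k:ℝ)+1) := by positivity
  -- window pair sums in (i,s) coordinates
  have key : ∀ t ∈ range (n-k), ((k:ℝ)+1) * Vw k z t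
      = ∑ i ∈ Icc t (t+k), ∑ s ∈ range k,
          (if i + s + 1 ≤ t + k then (z i - z (i+s+1))^2 else 0) := by
    intro t _
    have h1 := window_pair_eq k z t
    have h2 : ∑ i ∈ Icc t (t+k), ∑ j ∈ Icc t (t+k), (z i - z j)^2
        = 2 * ∑ i ∈ Icc t (t+k), ∑ j ∈ Icc t (t+k), (if i < j then (z i - z j)^2 else 0) := by
      apply sym_split
      · intro i j; ring
      · intro i; ring
    have h3 : ∀ i ∈ Icc t (t+k), ∑ j ∈ Icc t (t+k), (if i < j then (z i - z j)^2 else 0)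
        = ∑ s ∈ range k, (if i + s + 1 ≤ t + k then (z i - z (i+s+1))^2 else 0) := by
      intro i hi
      exact window_inner k t i (by simp at hi; omega) z
    rw [h2, Finset.sum_congr rfl h3] at h1
    linarith
  -- rewrite Icc as guarded sum over range n
  have key2 : ∀ t ∈ range (n-k), ((k:ℝ)+1) * Vw k z t
      = ∑ i ∈ range n, ∑ s ∈ range k,
          (if (t ≤ i ∧ i ≤ t + k) ∧ i + s + 1 ≤ t + k then (z i - z (i+s+1))^2 else 0) := by
    intro t ht
    rw [key t ht]
    have hIcc : Icc t (t+k) = (range n).filter (fun i => t ≤ i ∧ i ≤ t + k) := by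
      ext i; simp at ht ⊢; omega
    rw [hIcc, Finset.sum_filter]
    apply Finset.sum_congr rfl; intro i _
    split
    · rename_i hcond
      apply Finset.sum_congr rfl; intro s _
      simp [hcond]
    · rename_i hcond
      rw [Finset.sum_eq_zero]
      intro s _
      simp only [ite_eq_right_iff]
      intro hc; exact absurd hc.1 hcond
  have sumbound : ∑ t ∈ range (n-k), (((k:ℝ)+1) * Vw k z t) ≤ ((k:ℝ)+1) * Qz n k z := by
    rw [Finset.sum_congr rfl key2, Finset.sum_comm]
    have : ∀ i ∈ range n, ∑ t ∈ range (n-k), ∑ s ∈ range k,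
          (if (t ≤ i ∧ i ≤ t + k) ∧ i + s + 1 ≤ t + k then (z i - z (i+s+1))^2 else 0)
        = ∑ s ∈ range k, ∑ t ∈ range (n-k),
          (if (t ≤ i ∧ i ≤ t + k) ∧ i + s + 1 ≤ t + k then (z i - z (i+s+1))^2 else 0) :=
      fun i _ => Finset.sum_comm
    rw [Finset.sum_congr rfl this]
    unfold Qz
    rw [Finset.mul_sum]
    apply Finset.sum_le_sum; intro i _
    rw [Finset.mul_sum]
    apply Finset.sum_le_sum; intro s _
    set q : ℝ := (z i - z (i+s+1))^2 with hq
    have hq0 : 0 ≤ q := sq_nonneg _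
    set c : ℝ := if i + s + 1 < n then q else 0 with hc
    have hc0 : 0 ≤ c := by rw [hc]; split <;> simp [hq0]
    calc ∑ t ∈ range (n-k), (if (t ≤ i ∧ i ≤ t + k) ∧ i + s + 1 ≤ t + k then q else 0)
        ≤ ∑ t ∈ range (n-k), (if i + s + 1 ≤ t + k ∧ t ≤ i then c else 0) := by
          apply Finset.sum_le_sum; intro t ht
          simp only [Finset.mem_range] at ht
          by_cases h : (t ≤ i ∧ i ≤ t + k) ∧ i + s + 1 ≤ t + k
          · rw [if_pos h, if_pos ⟨h.2, h.1.1⟩, hc, if_pos (by omega)]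
          · rw [if_neg h]
            split
            · exact hc0
            · exact le_refl 0
      _ = (((range (n-k)).filter (fun t => i + s + 1 ≤ t + k ∧ t ≤ i)).card : ℝ) * c := by
          rw [← Finset.sum_filter, Finset.sum_const, nsmul_eq_mul]
      _ ≤ ((k:ℝ)+1) * c := by
          apply mul_le_mul_of_nonneg_right _ hc0
          have hsub : (range (n-k)).filter (fun t => i + s + 1 ≤ t + k ∧ t ≤ i)
              ⊆ Icc (i + s + 1 - k) i := by
            intro t htm; simp at htm ⊢; omega
          have := Finset.card_le_card hsub
          have hcard : (Icc (i + s + 1 - k) i).card ≤ k + 1 := by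
            rw [Nat.card_Icc]; omega
          have : ((range (n-k)).filter (fun t => i + s + 1 ≤ t + k ∧ t ≤ i)).card ≤ k + 1 := by omega
          exact_mod_cast this
  have : ((k:ℝ)+1) * ∑ t ∈ range (n-k), Vw k z t ≤ ((k:ℝ)+1) * Qz n k z := by
    rw [Finset.mul_sum]; exact sumbound
  have hK : (0:ℝ) < (k:ℝ)+1 := by positivity
  exact le_of_mul_le_mul_left this hK

lemma sum_z_mu_tau_le (n k : ℕ) (hk1n : k + 1 ≤ n) (z : ℕ → ℝ) :
    ∑ i ∈ range n, (z i - muw k z (min i (n-k-1)))^2 ≤ ∑ t ∈ range (n-k), Vw k z t := by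
  have hnk : 1 ≤ n - k := by omega
  have step1 : ∀ i ∈ range n, (z i - muw k z (min i (n-k-1)))^2
      = ∑ t ∈ range (n-k), (if t = min i (n-k-1) then (z i - muw k z t)^2 else 0) := by
    intro i _
    rw [Finset.sum_ite_eq' (range (n-k)) (min i (n-k-1)) (fun t => (z i - muw k z t)^2)]
    rw [if_pos (by simp; omega)]
  rw [Finset.sum_congr rfl step1, Finset.sum_comm]
  apply Finset.sum_le_sum
  intro t _
  rw [← Finset.sum_filter]
  unfold Vw
  apply Finset.sum_le_sum_of_subset_of_nonneg
  · intro i hi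
    simp only [Finset.mem_filter, Finset.mem_range] at hi
    simp only [Finset.mem_Icc]
    omega
  · intro i _ _; positivity

lemma mu_chain (n k : ℕ) (z : ℕ → ℝ) (t : ℕ) (ht : t < n - k) :
    (muw k z t - muw k z 0)^2
      ≤ (n:ℝ) * ∑ s ∈ range (n-k-1), (muw k z (s+1) - muw k z s)^2 := by
  have htele : muw k z t - muw k z 0 = ∑ s ∈ range t, (muw k z (s+1) - muw k z s) :=
    (Finset.sum_range_sub (muw k z) t).symm
  rw [htele]
  calc (∑ s ∈ range t, (muw k z (s+1) - muw k z s))^2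
      ≤ ((range t).card : ℝ) * ∑ s ∈ range t, (muw k z (s+1) - muw k z s)^2 :=
        sq_sum_le_card_mul_sum_sq
    _ ≤ (n:ℝ) * ∑ s ∈ range (n-k-1), (muw k z (s+1) - muw k z s)^2 := by
        apply mul_le_mul
        · simp only [Finset.card_range]; exact_mod_cast by omega
        · apply Finset.sum_le_sum_of_subset_of_nonneg
          · apply Finset.range_subset_range.mpr; omega
          · intro s _ _; positivity
        · apply Finset.sum_nonneg; intro s _; positivity
        · positivity

lemma mu_step (k : ℕ) (z : ℕ → ℝ) (s : ℕ) :
    muw k z (s+1) - muw k z s = (z (s+k+1) - z s) / ((k:ℝ)+1) := by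
  unfold muw
  rw [div_sub_div_same]
  congr 1
  unfold Sw
  have h1 : Icc (s+1) (s+1+k) = insert (s+k+1) (Icc (s+1) (s+k)) := by
    ext j; simp; omega
  have h2 : Icc s (s+k) = insert s (Icc (s+1) (s+k)) := by
    ext j; simp; omega
  rw [h1, h2, Finset.sum_insert (by simp only [Finset.mem_Icc]; omega), Finset.sum_insert (by simp only [Finset.mem_Icc]; omega)]
  ring

lemma R_le (n k : ℕ) (hk : 1 ≤ k) (z : ℕ → ℝ) :
    (k:ℝ) * ∑ s ∈ range (n-k-1), (z (s+k+1) - z s)^2 ≤ 4 * Qz n k z := by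
  have pt : ∀ s, (k:ℝ) * (z (s+k+1) - z s)^2
      ≤ ∑ j ∈ range k, (2*(z s - z (s+j+1))^2 + 2*(z (s+j+1) - z (s+k+1))^2) := by
    intro s
    have : (k:ℝ) * (z (s+k+1) - z s)^2 = ∑ j ∈ range k, (z (s+k+1) - z s)^2 := by
      rw [Finset.sum_const, Finset.card_range, nsmul_eq_mul]
    rw [this]
    apply Finset.sum_le_sum
    intro j _
    nlinarith [sq_nonneg (z s - 2*z (s+j+1) + z (s+k+1))]
  have hA : ∑ s ∈ range (n-k-1), ∑ j ∈ range k, (z s - z (s+j+1))^2 ≤ Qz n k z := by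
    unfold Qz
    have inner : ∀ s ∈ range (n-k-1), ∑ j ∈ range k, (z s - z (s+j+1))^2
        = ∑ j ∈ range k, (if s + j + 1 < n then (z s - z (s+j+1))^2 else 0) := by
      intro s hs
      simp only [Finset.mem_range] at hs
      apply Finset.sum_congr rfl
      intro j hj
      simp only [Finset.mem_range] at hj
      rw [if_pos (by omega)]
    rw [Finset.sum_congr rfl inner]
    apply Finset.sum_le_sum_of_subset_of_nonneg
    · apply Finset.range_subset_range.mpr; omega
    · intro i _ _
      apply Finset.sum_nonneg; intro j _; split
      · positivity
      · exact le_refl 0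
  have hB : ∑ s ∈ range (n-k-1), ∑ j ∈ range k, (z (s+j+1) - z (s+k+1))^2 ≤ Qz n k z := by
    rw [Finset.sum_comm]
    have hQ : Qz n k z
        = ∑ j ∈ range k, ∑ i ∈ range n, (if i + (k-1-j) + 1 < n then (z i - z (i+(k-1-j)+1))^2 else 0) := by
      unfold Qz
      rw [Finset.sum_comm]
      exact (Finset.sum_range_reflect
        (fun j => ∑ i ∈ range n, (if i + j + 1 < n then (z i - z (i+j+1))^2 else 0)) k).symm
    rw [hQ]
    apply Finset.sum_le_sum
    intro j hj
    simp only [Finset.mem_range] at hj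
    have hkj : k - 1 - j + 1 = k - j := by omega
    have lhs_eq : ∑ s ∈ range (n-k-1), (z (s+j+1) - z (s+k+1))^2
        = ∑ i ∈ Ico (j+1) (n-k-1+(j+1)), (if i + (k-1-j) + 1 < n then (z i - z (i+(k-1-j)+1))^2 else 0) := by
      rw [Finset.sum_Ico_eq_sum_range]
      have : n-k-1+(j+1) - (j+1) = n-k-1 := by omega
      rw [this]
      apply Finset.sum_congr rfl
      intro s hs
      simp only [Finset.mem_range] at hs
      rw [if_pos (by omega)]
      have e1 : s + j + 1 = j + 1 + s := by omega
      have e2 : s + k + 1 = j + 1 + s + (k - 1 - j) + 1 := by omega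
      rw [e1, e2]
    rw [lhs_eq]
    apply Finset.sum_le_sum_of_subset_of_nonneg
    · intro i hi; simp only [Finset.mem_Ico] at hi; simp only [Finset.mem_range]; omega
    · intro i _ _; split
      · positivity
      · exact le_refl 0
  calc (k:ℝ) * ∑ s ∈ range (n-k-1), (z (s+k+1) - z s)^2
      = ∑ s ∈ range (n-k-1), (k:ℝ) * (z (s+k+1) - z s)^2 := Finset.mul_sum _ _ _
    _ ≤ ∑ s ∈ range (n-k-1), ∑ j ∈ range k, (2*(z s - z (s+j+1))^2 + 2*(z (s+j+1) - z (s+k+1))^2) :=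
        Finset.sum_le_sum (fun s _ => pt s)
    _ = 2 * (∑ s ∈ range (n-k-1), ∑ j ∈ range k, (z s - z (s+j+1))^2)
        + 2 * (∑ s ∈ range (n-k-1), ∑ j ∈ range k, (z (s+j+1) - z (s+k+1))^2) := by
        rw [Finset.mul_sum, Finset.mul_sum, ← Finset.sum_add_distrib]
        apply Finset.sum_congr rfl
        intro s _
        rw [Finset.mul_sum, Finset.mul_sum, ← Finset.sum_add_distrib]
    _ ≤ 4 * Qz n k z := by linarith [hA, hB]

/-- The discrete Poincaré inequality for the k-connected path. -/
lemma poincare (n k : ℕ) (hk : 1 ≤ k) (hk1n : k + 1 ≤ n) (hkn : k * k ≤ n) (z : ℕ → ℝ) :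
    (k:ℝ)^3 * ∑ i ∈ range n, (z i - muw k z 0)^2 ≤ 10 * (n:ℝ)^2 * Qz n k z := by
  have hQ0 := Qz_nonneg n k z
  have hkR : (0:ℝ) < k := by exact_mod_cast hk
  have hK : (0:ℝ) < (k:ℝ) + 1 := by positivity
  set Q := Qz n k z with hQdef
  set R := ∑ s ∈ range (n-k-1), (z (s+k+1) - z s)^2 with hRdef
  have hR0 : 0 ≤ R := Finset.sum_nonneg (fun s _ => sq_nonneg _)
  have hRQ : (k:ℝ) * R ≤ 4 * Q := R_le n k hk z
  -- pointwise split
  have split : ∀ i ∈ range n, (z i - muw k z 0)^2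
      ≤ 2 * (z i - muw k z (min i (n-k-1)))^2 + 2 * (muw k z (min i (n-k-1)) - muw k z 0)^2 := by
    intro i _
    nlinarith [sq_nonneg (z i - 2 * muw k z (min i (n-k-1)) + muw k z 0)]
  have hsum1 : ∑ i ∈ range n, (z i - muw k z (min i (n-k-1)))^2 ≤ Q :=
    le_trans (sum_z_mu_tau_le n k hk1n z) (sum_V_le_Q n k z)
  have hchain : ∀ i ∈ range n, (muw k z (min i (n-k-1)) - muw k z 0)^2
      ≤ (n:ℝ) * (R / ((k:ℝ)+1)^2) := by
    intro i _
    have h1 := mu_chain n k z (min i (n-k-1)) (by omega)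
    have h2 : ∑ s ∈ range (n-k-1), (muw k z (s+1) - muw k z s)^2 = R / ((k:ℝ)+1)^2 := by
      rw [hRdef, Finset.sum_div]
      apply Finset.sum_congr rfl
      intro s _
      rw [mu_step, div_pow]
    rw [h2] at h1
    exact h1
  have hsum2 : ∑ i ∈ range n, (muw k z (min i (n-k-1)) - muw k z 0)^2
      ≤ (n:ℝ)^2 * (R / ((k:ℝ)+1)^2) := by
    calc ∑ i ∈ range n, (muw k z (min i (n-k-1)) - muw k z 0)^2
        ≤ ∑ _i ∈ range n, (n:ℝ) * (R / ((k:ℝ)+1)^2) := Finset.sum_le_sum hchain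
      _ = (n:ℝ) * ((n:ℝ) * (R / ((k:ℝ)+1)^2)) := by
          rw [Finset.sum_const, Finset.card_range, nsmul_eq_mul]
      _ = (n:ℝ)^2 * (R / ((k:ℝ)+1)^2) := by ring
  have main : ∑ i ∈ range n, (z i - muw k z 0)^2 ≤ 2 * Q + 2 * ((n:ℝ)^2 * (R / ((k:ℝ)+1)^2)) := by
    calc ∑ i ∈ range n, (z i - muw k z 0)^2
        ≤ ∑ i ∈ range n, (2 * (z i - muw k z (min i (n-k-1)))^2
            + 2 * (muw k z (min i (n-k-1)) - muw k z 0)^2) := Finset.sum_le_sum split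
      _ = 2 * ∑ i ∈ range n, (z i - muw k z (min i (n-k-1)))^2
            + 2 * ∑ i ∈ range n, (muw k z (min i (n-k-1)) - muw k z 0)^2 := by
          rw [Finset.sum_add_distrib, Finset.mul_sum, Finset.mul_sum]
      _ ≤ 2 * Q + 2 * ((n:ℝ)^2 * (R / ((k:ℝ)+1)^2)) := by
          apply add_le_add <;> apply mul_le_mul_of_nonneg_left _ (by norm_num)
          · exact hsum1
          · exact hsum2
  -- now multiply by k^3
  have hkn' : (k:ℝ)^3 ≤ (n:ℝ)^2 := by
    have h1 : k^3 ≤ n^2 := by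
      calc k^3 = k * (k*k) := by ring
        _ ≤ n * n := Nat.mul_le_mul (by omega) hkn
        _ = n^2 := by ring
    exact_mod_cast h1
  have hRQ2 : (k:ℝ)^3 * ((n:ℝ)^2 * (R / ((k:ℝ)+1)^2)) ≤ 4 * (n:ℝ)^2 * Q := by
    have e1 : (k:ℝ)^3 * ((n:ℝ)^2 * (R / ((k:ℝ)+1)^2))
        = (n:ℝ)^2 * (((k:ℝ)^2/((k:ℝ)+1)^2) * ((k:ℝ) * R)) := by
      field_simp
    rw [e1]
    have h2 : ((k:ℝ)^2/((k:ℝ)+1)^2) * ((k:ℝ) * R) ≤ 1 * (4 * Q) := by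
      apply mul_le_mul
      · rw [div_le_one (by positivity)]; nlinarith
      · exact hRQ
      · positivity
      · norm_num
    calc (n:ℝ)^2 * (((k:ℝ)^2/((k:ℝ)+1)^2) * ((k:ℝ) * R))
        ≤ (n:ℝ)^2 * (1 * (4 * Q)) := by
          apply mul_le_mul_of_nonneg_left h2 (by positivity)
      _ = 4 * (n:ℝ)^2 * Q := by ring
  have hS0 : 0 ≤ ∑ i ∈ range n, (z i - muw k z 0)^2 :=
    Finset.sum_nonneg (fun i _ => sq_nonneg _)
  calc (k:ℝ)^3 * ∑ i ∈ range n, (z i - muw k z 0)^2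
      ≤ (k:ℝ)^3 * (2 * Q + 2 * ((n:ℝ)^2 * (R / ((k:ℝ)+1)^2))) := by
        apply mul_le_mul_of_nonneg_left main (by positivity)
    _ = 2 * ((k:ℝ)^3 * Q) + 2 * ((k:ℝ)^3 * ((n:ℝ)^2 * (R / ((k:ℝ)+1)^2))) := by ring
    _ ≤ 2 * ((n:ℝ)^2 * Q) + 2 * (4 * (n:ℝ)^2 * Q) := by
        apply add_le_add
        · apply mul_le_mul_of_nonneg_left _ (by norm_num)
          apply mul_le_mul_of_nonneg_right hkn' hQ0
        · apply mul_le_mul_of_nonneg_left hRQ2 (by norm_num)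
    _ = 10 * (n:ℝ)^2 * Q := by ring

end KPath2

namespace KPath3
open KPath KPath2

lemma adj_eq (n k : ℕ) (i j : Fin n) : pathAdj n k i j
    = if (i.val ≠ j.val ∧ i.val ≤ j.val + k ∧ j.val ≤ i.val + k) then 1 else 0 := by
  unfold pathAdj
  simp only [Matrix.of_apply]
  by_cases h : i.val ≠ j.val ∧ i.val ≤ j.val + k ∧ j.val ≤ i.val + k
  · rw [if_pos h, if_pos]
    refine ⟨fun he => h.1 (by rw [he]), ?_, ?_⟩ <;> push_cast <;> omega
  · rw [if_neg h, if_neg]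
    intro ⟨h1, h2, h3⟩
    apply h
    refine ⟨fun he => h1 (Fin.ext he), ?_, ?_⟩ <;> omega
  
lemma adj_symm (n k : ℕ) (i j : Fin n) : pathAdj n k i j = pathAdj n k j i := by
  rw [adj_eq, adj_eq]
  by_cases h : i.val ≠ j.val ∧ i.val ≤ j.val + k ∧ j.val ≤ i.val + k
  · rw [if_pos h, if_pos (by omega)]
  · rw [if_neg h, if_neg (by omega)]

lemma adj_nonneg (n k : ℕ) (i j : Fin n) : 0 ≤ pathAdj n k i j := by
  rw [adj_eq]; split <;> norm_num

lemma deg_eq_card (n k : ℕ) (i : Fin n) : pathDeg n k i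
    = ((Finset.univ.filter (fun j : Fin n =>
        i.val ≠ j.val ∧ i.val ≤ j.val + k ∧ j.val ≤ i.val + k)).card : ℝ) := by
  unfold pathDeg
  rw [Finset.sum_congr rfl (fun j _ => adj_eq n k i j), Finset.sum_ite, Finset.sum_const,
    Finset.sum_const]
  simp

lemma deg_le (n k : ℕ) (i : Fin n) : pathDeg n k i ≤ 2 * k := by
  rw [deg_eq_card]
  have hsub : ∀ j ∈ Finset.univ.filter (fun j : Fin n =>
      i.val ≠ j.val ∧ i.val ≤ j.val + k ∧ j.val ≤ i.val + k),
      (j.val) ∈ (Icc (i.val - k) (i.val + k)).erase i.val := by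
    intro j hj
    simp only [Finset.mem_filter, Finset.mem_univ, true_and] at hj
    simp only [Finset.mem_erase, Finset.mem_Icc]
    omega
  have hinj : Set.InjOn (fun j : Fin n => j.val) (Finset.univ.filter (fun j : Fin n =>
      i.val ≠ j.val ∧ i.val ≤ j.val + k ∧ j.val ≤ i.val + k)) := by
    intro a _ b _ hab
    exact Fin.ext hab
  have := Finset.card_le_card_of_injOn _ hsub hinj
  have hcard : ((Icc (i.val - k) (i.val + k)).erase i.val).card ≤ 2 * k := by
    have h1 : i.val ∈ Icc (i.val - k) (i.val + k) := by simp only [Finset.mem_Icc]; omega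
    rw [Finset.card_erase_of_mem h1, Nat.card_Icc]
    omega
  have h2 : (Finset.univ.filter (fun j : Fin n =>
      i.val ≠ j.val ∧ i.val ≤ j.val + k ∧ j.val ≤ i.val + k)).card ≤ 2 * k := le_trans this hcard
  exact_mod_cast h2

lemma deg_ge (n k : ℕ) (hk : 1 ≤ k) (h2kn : 2 * k ≤ n) (i : Fin n) :
    (k : ℝ) ≤ pathDeg n k i := by
  rw [deg_eq_card]
  have hn0 : 0 < n := by omega
  set f : ℕ → Fin n := fun s =>
    ⟨(if k ≤ i.val then i.val - (s+1) else i.val + (s+1)) % n, Nat.mod_lt _ hn0⟩ with hf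
  have hval : ∀ s ∈ range k, (f s).val
      = if k ≤ i.val then i.val - (s+1) else i.val + (s+1) := by
    intro s hs
    simp only [Finset.mem_range] at hs
    simp only [hf]
    apply Nat.mod_eq_of_lt
    split <;> omega
  have hmaps : ∀ s ∈ range k, f s ∈ Finset.univ.filter (fun j : Fin n =>
      i.val ≠ j.val ∧ i.val ≤ j.val + k ∧ j.val ≤ i.val + k) := by
    intro s hs
    have hv := hval s hs
    simp only [Finset.mem_range] at hs
    simp only [Finset.mem_filter, Finset.mem_univ, true_and]
    have hv' : (if k ≤ i.val then i.val - (s+1) else i.val + (s+1)) % n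
        = (if k ≤ i.val then i.val - (s+1) else i.val + (s+1)) :=
      Nat.mod_eq_of_lt (by split <;> omega)
    rw [hv]
    split <;> omega
  have hinj : Set.InjOn f (range k) := by
    intro a ha b hb hab
    simp only [Finset.coe_range, Set.mem_Iio] at ha hb
    have h1 := hval a (Finset.mem_range.mpr ha)
    have h2 := hval b (Finset.mem_range.mpr hb)
    have h3 : (f a).val = (f b).val := congrArg Fin.val hab
    rw [h1, h2] at h3
    split at h3 <;> omega
  have := Finset.card_le_card_of_injOn f hmaps hinj
  rw [Finset.card_range] at this
  exact_mod_cast this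

lemma deg_pos (n k : ℕ) (hk : 1 ≤ k) (h2kn : 2 * k ≤ n) (i : Fin n) :
    0 < pathDeg n k i :=
  lt_of_lt_of_le (by exact_mod_cast hk : (0:ℝ) < k) (deg_ge n k hk h2kn i)


noncomputable def zfun (n k : ℕ) (x : Fin n → ℝ) : ℕ → ℝ :=
  fun j => if h : j < n then x ⟨j,h⟩ / Real.sqrt (pathDeg n k ⟨j,h⟩) else 0

noncomputable def dfun (n k : ℕ) : ℕ → ℝ :=
  fun j => if h : j < n then pathDeg n k ⟨j,h⟩ else 0

lemma zfun_eq (n k : ℕ) (x : Fin n → ℝ) (i : Fin n) :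
    zfun n k x i.val = x i / Real.sqrt (pathDeg n k i) := by
  unfold zfun
  rw [dif_pos i.isLt]

lemma dfun_eq (n k : ℕ) (i : Fin n) : dfun n k i.val = pathDeg n k i := by
  unfold dfun
  rw [dif_pos i.isLt]

lemma dfun_nonneg (n k : ℕ) (j : ℕ) : 0 ≤ dfun n k j := by
  unfold dfun
  split
  · exact Finset.sum_nonneg (fun j _ => adj_nonneg n k _ j)
  · exact le_refl 0

lemma deg_nonneg (n k : ℕ) (i : Fin n) : 0 ≤ pathDeg n k i :=
  Finset.sum_nonneg (fun j _ => adj_nonneg n k _ j)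

lemma deg_w_sq (n k : ℕ) (hk : 1 ≤ k) (h2kn : 2 * k ≤ n) (x : Fin n → ℝ) (i : Fin n) :
    pathDeg n k i * (x i / Real.sqrt (pathDeg n k i))^2 = x i ^ 2 := by
  have hD := deg_pos n k hk h2kn i
  have hs : Real.sqrt (pathDeg n k i) ^ 2 = pathDeg n k i := Real.sq_sqrt (le_of_lt hD)
  have hDne : pathDeg n k i ≠ 0 := ne_of_gt hD
  rw [div_pow, hs, mul_comm]
  exact div_mul_cancel₀ _ hDne

lemma quad_form (n k : ℕ) (hk : 1 ≤ k) (h2kn : 2 * k ≤ n) (x : Fin n → ℝ) :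
    ∑ i, x i * ((pathLap n k).mulVec x) i = Qz n k (zfun n k x) := by
  set w : Fin n → ℝ := fun i => x i / Real.sqrt (pathDeg n k i) with hw
  set z : ℕ → ℝ := zfun n k x with hz
  have hzw : ∀ i : Fin n, z i.val = w i := fun i => zfun_eq n k x i
  -- step a
  have ha : ∑ i, x i * ((pathLap n k).mulVec x) i
      = ∑ i, x i ^ 2 - ∑ i : Fin n, ∑ j : Fin n, pathAdj n k i j * (w i * w j) := by
    have hmv : ∀ i, x i * ((pathLap n k).mulVec x) i
        = x i ^ 2 - ∑ j : Fin n, pathAdj n k i j * (w i * w j) := by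
      intro i
      have h0 : ((pathLap n k).mulVec x) i
          = ∑ j : Fin n, ((if i = j then (1:ℝ) else 0)
              - pathAdj n k i j / (Real.sqrt (pathDeg n k i) * Real.sqrt (pathDeg n k j))) * x j := by
        simp [Matrix.mulVec, dotProduct, pathLap]
      rw [h0, Finset.sum_congr rfl (fun j _ => sub_mul _ _ (x j)), Finset.sum_sub_distrib]
      have h1 : ∑ j : Fin n, (if i = j then (1:ℝ) else 0) * x j = x i := by
        simp [ite_mul]
      rw [h1, mul_sub]
      have h2 : x i * ∑ j : Fin n, pathAdj n k i j
            / (Real.sqrt (pathDeg n k i) * Real.sqrt (pathDeg n k j)) * x j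
          = ∑ j : Fin n, pathAdj n k i j * (w i * w j) := by
        rw [Finset.mul_sum]
        apply Finset.sum_congr rfl
        intro j _
        show _ = pathAdj n k i j * ((x i / Real.sqrt (pathDeg n k i)) * (x j / Real.sqrt (pathDeg n k j)))
        ring
      rw [h2]
      ring
    rw [Finset.sum_congr rfl (fun i _ => hmv i), Finset.sum_sub_distrib]
  -- step b
  have hb : ∑ i : Fin n, ∑ j : Fin n, pathAdj n k i j * (w i - w j)^2
      = 2 * ∑ i, x i ^ 2 - 2 * ∑ i : Fin n, ∑ j : Fin n, pathAdj n k i j * (w i * w j) := by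
    have t1 : ∑ i : Fin n, ∑ j : Fin n, pathAdj n k i j * (w i - w j)^2
        = (∑ i : Fin n, ∑ j : Fin n, pathAdj n k i j * w i ^ 2)
          + (∑ i : Fin n, ∑ j : Fin n, pathAdj n k i j * w j ^ 2)
          - ∑ i : Fin n, ∑ j : Fin n, 2 * (pathAdj n k i j * (w i * w j)) := by
      rw [← Finset.sum_add_distrib, ← Finset.sum_sub_distrib]
      apply Finset.sum_congr rfl
      intro i _
      rw [← Finset.sum_add_distrib, ← Finset.sum_sub_distrib]
      apply Finset.sum_congr rfl
      intro j _
      ring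
    have t2 : ∑ i : Fin n, ∑ j : Fin n, pathAdj n k i j * w i ^ 2 = ∑ i, x i ^ 2 := by
      apply Finset.sum_congr rfl
      intro i _
      rw [← Finset.sum_mul]
      exact deg_w_sq n k hk h2kn x i
    have t3 : ∑ i : Fin n, ∑ j : Fin n, pathAdj n k i j * w j ^ 2 = ∑ i, x i ^ 2 := by
      rw [Finset.sum_comm]
      apply Finset.sum_congr rfl
      intro j _
      rw [← Finset.sum_mul]
      rw [show (∑ i : Fin n, pathAdj n k i j) = pathDeg n k j from by
        rw [Finset.sum_congr rfl (fun i _ => adj_symm n k i j)]; rfl]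
      exact deg_w_sq n k hk h2kn x j
    have t4 : ∑ i : Fin n, ∑ j : Fin n, 2 * (pathAdj n k i j * (w i * w j))
        = 2 * ∑ i : Fin n, ∑ j : Fin n, pathAdj n k i j * (w i * w j) := by
      rw [Finset.mul_sum]
      apply Finset.sum_congr rfl
      intro i _
      rw [Finset.mul_sum]
    rw [t1, t2, t3, t4]
    ring
  -- step d: convert pair sum to ℕ indexing
  set g : ℕ → ℕ → ℝ := fun i j =>
    (if i ≠ j ∧ i ≤ j + k ∧ j ≤ i + k then (1:ℝ) else 0) * (z i - z j)^2 with hg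
  have hd : ∑ i : Fin n, ∑ j : Fin n, pathAdj n k i j * (w i - w j)^2
      = ∑ i ∈ range n, ∑ j ∈ range n, g i j := by
    rw [← Fin.sum_univ_eq_sum_range (fun m => ∑ j ∈ range n, g m j) n]
    apply Finset.sum_congr rfl
    intro i _
    rw [← Fin.sum_univ_eq_sum_range (fun m => g i.val m) n]
    apply Finset.sum_congr rfl
    intro j _
    rw [adj_eq]
    simp only [hg, hzw]
  -- step e: symmetric split and reindex to Qz
  have he : ∑ i ∈ range n, ∑ j ∈ range n, g i j = 2 * Qz n k z := by
    rw [sym_split (range n) g ?hsym ?hdiag]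
    case hsym =>
      intro i j
      rw [hg]
      by_cases h : i ≠ j ∧ i ≤ j + k ∧ j ≤ i + k
      · simp only []
        rw [if_pos h, if_pos (by omega)]
        ring
      · simp only []
        rw [if_neg h, if_neg (by omega)]
        ring
    case hdiag =>
      intro i
      rw [hg]
      simp
    congr 1
    unfold Qz
    apply Finset.sum_congr rfl
    intro i hi
    simp only [Finset.mem_range] at hi
    have hpt : ∀ j, (if i < j then g i j else 0)
        = if i < j ∧ j ≤ i + k then (z i - z j)^2 else 0 := by
      intro j
      by_cases h1 : i < j
      · rw [if_pos h1]
        by_cases h2 : j ≤ i + k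
        · rw [if_pos ⟨h1, h2⟩, hg]
          simp only []
          rw [if_pos (by omega)]
          ring
        · rw [if_neg (fun hc => h2 hc.2), hg]
          simp only []
          rw [if_neg (by omega)]
          ring
      · rw [if_neg h1, if_neg (fun hc => h1 hc.1)]
    rw [Finset.sum_congr rfl (fun j _ => hpt j), ← Finset.sum_filter]
    have hset : (range n).filter (fun j => i < j ∧ j ≤ i + k) = Ico (i+1) (min (i+k+1) n) := by
      ext j; simp; omega
    rw [hset, Finset.sum_Ico_eq_sum_range]
    have hm : min (i+k+1) n - (i+1) ≤ k := by omega
    rw [extend_range _ k hm]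
    apply Finset.sum_congr rfl
    intro s hs
    simp only [Finset.mem_range] at hs
    have hiff : s < min (i+k+1) n - (i+1) ↔ i + s + 1 < n := by omega
    simp only [hiff]
    split
    · have : i + 1 + s = i + s + 1 := by omega
      rw [this]
    · rfl
  rw [hd, he] at hb
  rw [ha]
  linarith

lemma sum_sq_transfer (n k : ℕ) (hk : 1 ≤ k) (h2kn : 2 * k ≤ n) (x : Fin n → ℝ) :
    ∑ i, x i ^ 2 = ∑ i ∈ range n, dfun n k i * (zfun n k x i)^2 := by
  rw [← Fin.sum_univ_eq_sum_range (fun m => dfun n k m * (zfun n k x m)^2) n]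
  apply Finset.sum_congr rfl
  intro i _
  rw [zfun_eq, dfun_eq]
  exact (deg_w_sq n k hk h2kn x i).symm

lemma constraint_transfer (n k : ℕ) (hk : 1 ≤ k) (h2kn : 2 * k ≤ n) (x : Fin n → ℝ) :
    ∑ i, x i * Real.sqrt (pathDeg n k i) = ∑ i ∈ range n, dfun n k i * zfun n k x i := by
  rw [← Fin.sum_univ_eq_sum_range (fun m => dfun n k m * zfun n k x m) n]
  apply Finset.sum_congr rfl
  intro i _
  rw [zfun_eq, dfun_eq]
  have hD := deg_pos n k hk h2kn i
  rw [mul_div_assoc']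
  rw [mul_comm (pathDeg n k i) (x i), mul_div_assoc, Real.div_sqrt]


lemma two_k_le (n k : ℕ) (hn : 2 ≤ n) (hk : 1 ≤ k) (hkn : k * k ≤ n) : 2 * k ≤ n := by
  rcases Nat.lt_or_ge k 2 with h | h
  · omega
  · have : 2 * k ≤ k * k := Nat.mul_le_mul_right k h
    omega

lemma dfun_le (n k : ℕ) (j : ℕ) : dfun n k j ≤ 2 * k := by
  unfold dfun
  split
  · exact deg_le n k _
  · positivity

lemma lam_lower (n k : ℕ) (hn : 2 ≤ n) (hk : 1 ≤ k) (hkn : k * k ≤ n) (x : Fin n → ℝ)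
    (hx : x ≠ 0) (hc : ∑ i, x i * Real.sqrt (pathDeg n k i) = 0) :
    (1/20) * (k:ℝ)^2 / (n:ℝ)^2
      ≤ (∑ i, x i * ((pathLap n k).mulVec x) i) / ∑ i, x i ^ 2 := by
  have h2kn : 2 * k ≤ n := two_k_le n k hn hk hkn
  have hk1n : k + 1 ≤ n := by omega
  have hkR : (0:ℝ) < k := by exact_mod_cast hk
  have hnR : (0:ℝ) < n := by exact_mod_cast (by omega : 0 < n)
  set z : ℕ → ℝ := zfun n k x with hzdef
  set d : ℕ → ℝ := dfun n k with hddef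
  set μ : ℝ := muw k z 0 with hmu
  have hQeq : ∑ i, x i * ((pathLap n k).mulVec x) i = Qz n k z := quad_form n k hk h2kn x
  have hXeq : ∑ i, x i ^ 2 = ∑ i ∈ range n, d i * (z i)^2 := sum_sq_transfer n k hk h2kn x
  have h0 : ∑ i ∈ range n, d i * z i = 0 := by
    rw [← constraint_transfer n k hk h2kn x]; exact hc
  have hXpos : 0 < ∑ i, x i ^ 2 := by
    obtain ⟨i0, hi0⟩ := Function.ne_iff.mp hx
    apply Finset.sum_pos' (fun i _ => sq_nonneg (x i))
    exact ⟨i0, Finset.mem_univ _, lt_of_le_of_ne (sq_nonneg _) (Ne.symm (pow_ne_zero 2 hi0))⟩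
  have hshift : ∑ i ∈ range n, d i * (z i)^2 ≤ ∑ i ∈ range n, d i * (z i - μ)^2 := by
    have hexp : ∑ i ∈ range n, d i * (z i - μ)^2
        = ∑ i ∈ range n, d i * (z i)^2 - 2 * μ * (∑ i ∈ range n, d i * z i)
          + μ^2 * ∑ i ∈ range n, d i := by
      rw [Finset.mul_sum, Finset.mul_sum, ← Finset.sum_sub_distrib, ← Finset.sum_add_distrib]
      apply Finset.sum_congr rfl
      intro i _
      ring
    rw [hexp, h0]
    have : 0 ≤ μ^2 * ∑ i ∈ range n, d i := by
      apply mul_nonneg (sq_nonneg _)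
      exact Finset.sum_nonneg (fun i _ => dfun_nonneg n k i)
    linarith
  have h2k : ∑ i ∈ range n, d i * (z i - μ)^2 ≤ 2 * k * ∑ i ∈ range n, (z i - μ)^2 := by
    rw [Finset.mul_sum]
    apply Finset.sum_le_sum
    intro i _
    apply mul_le_mul_of_nonneg_right (dfun_le n k i) (sq_nonneg _)
  have hpoin := poincare n k hk hk1n hkn z
  have hQ0 := Qz_nonneg n k z
  rw [hQeq]
  rw [div_le_div_iff₀ (by positivity) hXpos]
  -- goal : 1/20 * k^2 * X ≤ Q * n^2 ; we know k^3 * X ≤ 20 * k * n^2 * Q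
  have hchain : (k:ℝ)^3 * ∑ i, x i ^ 2 ≤ 20 * k * (n:ℝ)^2 * Qz n k z := by
    have s1 : (k:ℝ)^3 * ∑ i, x i ^ 2 ≤ (k:ℝ)^3 * (2 * k * ∑ i ∈ range n, (z i - μ)^2) := by
      apply mul_le_mul_of_nonneg_left _ (by positivity)
      rw [hXeq]
      exact le_trans hshift h2k
    have s2 : (k:ℝ)^3 * (2 * k * ∑ i ∈ range n, (z i - μ)^2)
        = 2 * k * ((k:ℝ)^3 * ∑ i ∈ range n, (z i - μ)^2) := by ring
    have s3 : 2 * (k:ℝ) * ((k:ℝ)^3 * ∑ i ∈ range n, (z i - μ)^2)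
        ≤ 2 * k * (10 * (n:ℝ)^2 * Qz n k z) := by
      apply mul_le_mul_of_nonneg_left hpoin (by positivity)
    calc (k:ℝ)^3 * ∑ i, x i ^ 2 ≤ 2 * k * ((k:ℝ)^3 * ∑ i ∈ range n, (z i - μ)^2) := by
          rw [← s2]; exact s1
      _ ≤ 2 * k * (10 * (n:ℝ)^2 * Qz n k z) := s3
      _ = 20 * k * (n:ℝ)^2 * Qz n k z := by ring
  have hfinal : (k:ℝ)^2 * ∑ i, x i ^ 2 ≤ 20 * (n:ℝ)^2 * Qz n k z := by
    have := hchain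
    have hmul : (k:ℝ) * ((k:ℝ)^2 * ∑ i, x i ^ 2) ≤ (k:ℝ) * (20 * (n:ℝ)^2 * Qz n k z) := by
      calc (k:ℝ) * ((k:ℝ)^2 * ∑ i, x i ^ 2) = (k:ℝ)^3 * ∑ i, x i ^ 2 := by ring
        _ ≤ 20 * k * (n:ℝ)^2 * Qz n k z := hchain
        _ = (k:ℝ) * (20 * (n:ℝ)^2 * Qz n k z) := by ring
    exact le_of_mul_le_mul_left hmul hkR
  linarith

noncomputable def cstar (n k : ℕ) : ℝ :=
  (∑ i : Fin n, pathDeg n k i * i.val) / (∑ i : Fin n, pathDeg n k i)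

noncomputable def xtest (n k : ℕ) : Fin n → ℝ :=
  fun i => Real.sqrt (pathDeg n k i) * ((i.val : ℝ) - cstar n k)

lemma vol_pos (n k : ℕ) (hn : 2 ≤ n) (hk : 1 ≤ k) (h2kn : 2 * k ≤ n) :
    0 < ∑ i : Fin n, pathDeg n k i := by
  have : Nonempty (Fin n) := ⟨⟨0, by omega⟩⟩
  exact Finset.sum_pos (fun i _ => deg_pos n k hk h2kn i) Finset.univ_nonempty

lemma xtest_constraint (n k : ℕ) (hn : 2 ≤ n) (hk : 1 ≤ k) (h2kn : 2 * k ≤ n) :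
    ∑ i, xtest n k i * Real.sqrt (pathDeg n k i) = 0 := by
  have hvol := vol_pos n k hn hk h2kn
  have hpt : ∀ i : Fin n, xtest n k i * Real.sqrt (pathDeg n k i)
      = pathDeg n k i * ((i.val : ℝ) - cstar n k) := by
    intro i
    unfold xtest
    rw [mul_comm, ← mul_assoc, Real.mul_self_sqrt (deg_nonneg n k i)]
  rw [Finset.sum_congr rfl (fun i _ => hpt i)]
  have hsplit : ∑ i : Fin n, pathDeg n k i * ((i.val : ℝ) - cstar n k)
      = (∑ i : Fin n, pathDeg n k i * i.val) - cstar n k * ∑ i : Fin n, pathDeg n k i := by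
    rw [Finset.mul_sum, ← Finset.sum_sub_distrib]
    apply Finset.sum_congr rfl
    intro i _
    ring
  rw [hsplit]
  unfold cstar
  field_simp
  ring

lemma xtest_ne (n k : ℕ) (hn : 2 ≤ n) (hk : 1 ≤ k) (h2kn : 2 * k ≤ n) :
    xtest n k ≠ 0 := by
  intro h
  have h0 := congrFun h ⟨0, by omega⟩
  have h1 := congrFun h ⟨1, by omega⟩
  simp only [xtest, Pi.zero_apply] at h0 h1
  have hs0 : Real.sqrt (pathDeg n k ⟨0, by omega⟩) ≠ 0 := by
    have := deg_pos n k hk h2kn ⟨0, by omega⟩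
    positivity
  have hs1 : Real.sqrt (pathDeg n k ⟨1, by omega⟩) ≠ 0 := by
    have := deg_pos n k hk h2kn ⟨1, by omega⟩
    positivity
  have e0 := (mul_eq_zero.mp h0).resolve_left hs0
  have e1 := (mul_eq_zero.mp h1).resolve_left hs1
  push_cast at e0 e1
  linarith

lemma zfun_xtest (n k : ℕ) (hn : 2 ≤ n) (hk : 1 ≤ k) (h2kn : 2 * k ≤ n) (j : ℕ) (hj : j < n) :
    zfun n k (xtest n k) j = (j : ℝ) - cstar n k := by
  unfold zfun
  rw [dif_pos hj]
  unfold xtest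
  have hD := deg_pos n k hk h2kn ⟨j, hj⟩
  have hs : Real.sqrt (pathDeg n k ⟨j, hj⟩) ≠ 0 := by positivity
  rw [mul_comm, mul_div_assoc, div_self hs, mul_one]

lemma xtest_energy (n k : ℕ) (hn : 2 ≤ n) (hk : 1 ≤ k) (h2kn : 2 * k ≤ n) :
    Qz n k (zfun n k (xtest n k)) ≤ (n:ℝ) * (k:ℝ)^3 := by
  unfold Qz
  have hbound : ∀ i ∈ range n, ∑ s ∈ range k,
      (if i + s + 1 < n then (zfun n k (xtest n k) i - zfun n k (xtest n k) (i+s+1))^2 else 0)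
      ≤ (k:ℝ) * (k:ℝ)^2 := by
    intro i hi
    simp only [Finset.mem_range] at hi
    calc ∑ s ∈ range k,
        (if i + s + 1 < n then (zfun n k (xtest n k) i - zfun n k (xtest n k) (i+s+1))^2 else 0)
        ≤ ∑ _s ∈ range k, (k:ℝ)^2 := by
          apply Finset.sum_le_sum
          intro s hs
          simp only [Finset.mem_range] at hs
          split
          · rename_i hcond
            rw [zfun_xtest n k hn hk h2kn i hi, zfun_xtest n k hn hk h2kn (i+s+1) hcond]
            have : ((i:ℝ) - cstar n k) - (((i+s+1 : ℕ) : ℝ) - cstar n k) = -((s:ℝ)+1) := by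
              push_cast; ring
            rw [this]
            have hsk : (s:ℝ) + 1 ≤ (k:ℝ) := by exact_mod_cast (by omega : s + 1 ≤ k)
            have hs0 : (0:ℝ) ≤ (s:ℝ) + 1 := by positivity
            calc (-((s:ℝ)+1))^2 = ((s:ℝ)+1)^2 := by ring
              _ ≤ (k:ℝ)^2 := by nlinarith
          · positivity
      _ = (k:ℝ) * (k:ℝ)^2 := by
          rw [Finset.sum_const, Finset.card_range, nsmul_eq_mul]
  calc ∑ i ∈ range n, ∑ s ∈ range k,
      (if i + s + 1 < n then (zfun n k (xtest n k) i - zfun n k (xtest n k) (i+s+1))^2 else 0)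
      ≤ ∑ _i ∈ range n, (k:ℝ) * (k:ℝ)^2 := Finset.sum_le_sum hbound
    _ = (n:ℝ) * (k:ℝ)^3 := by
        rw [Finset.sum_const, Finset.card_range, nsmul_eq_mul]; ring

lemma sum_range_cast (n : ℕ) : ∑ i ∈ range n, (i:ℝ) = (n:ℝ) * ((n:ℝ) - 1) / 2 := by
  induction n with
  | zero => simp
  | succ m ih => rw [Finset.sum_range_succ, ih]; push_cast; ring

lemma sum_range_sq_cast (n : ℕ) :
    ∑ i ∈ range n, (i:ℝ)^2 = (n:ℝ) * ((n:ℝ) - 1) * (2*(n:ℝ) - 1) / 6 := by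
  induction n with
  | zero => simp
  | succ m ih => rw [Finset.sum_range_succ, ih]; push_cast; ring

lemma sum_sq_dev (n : ℕ) (hn : 2 ≤ n) (c : ℝ) :
    (n:ℝ)^3 / 24 ≤ ∑ i ∈ range n, ((i:ℝ) - c)^2 := by
  have hexp : ∑ i ∈ range n, ((i:ℝ) - c)^2
      = (∑ i ∈ range n, (i:ℝ)^2) - 2 * c * (∑ i ∈ range n, (i:ℝ)) + (n:ℝ) * c^2 := by
    rw [Finset.mul_sum, ← Finset.sum_sub_distrib]
    rw [show ((n:ℝ) * c^2) = ∑ _i ∈ range n, c^2 from by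
      rw [Finset.sum_const, Finset.card_range, nsmul_eq_mul]]
    rw [← Finset.sum_add_distrib]
    apply Finset.sum_congr rfl
    intro i _
    ring
  rw [hexp, sum_range_cast, sum_range_sq_cast]
  have hnR : (2:ℝ) ≤ (n:ℝ) := by exact_mod_cast hn
  nlinarith [sq_nonneg (c - ((n:ℝ) - 1)/2), sq_nonneg ((n:ℝ) - 2)]

lemma xtest_norm (n k : ℕ) (hn : 2 ≤ n) (hk : 1 ≤ k) (h2kn : 2 * k ≤ n) :
    (k:ℝ) * (n:ℝ)^3 / 24 ≤ ∑ i, xtest n k i ^ 2 := by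
  have hpt : ∀ i : Fin n, (k:ℝ) * ((i.val:ℝ) - cstar n k)^2 ≤ xtest n k i ^ 2 := by
    intro i
    unfold xtest
    rw [mul_pow, Real.sq_sqrt (deg_nonneg n k i)]
    apply mul_le_mul_of_nonneg_right (deg_ge n k hk h2kn i) (sq_nonneg _)
  calc (k:ℝ) * (n:ℝ)^3 / 24 = (k:ℝ) * ((n:ℝ)^3/24) := by ring
    _ ≤ (k:ℝ) * ∑ i ∈ range n, ((i:ℝ) - cstar n k)^2 := by
        apply mul_le_mul_of_nonneg_left (sum_sq_dev n hn (cstar n k)) (by positivity)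
    _ = ∑ i : Fin n, (k:ℝ) * ((i.val:ℝ) - cstar n k)^2 := by
        rw [Finset.mul_sum, ← Fin.sum_univ_eq_sum_range (fun m => (k:ℝ) * ((m:ℝ) - cstar n k)^2) n]
    _ ≤ ∑ i, xtest n k i ^ 2 := Finset.sum_le_sum (fun i _ => hpt i)


lemma lamSecond_bounds (n k : ℕ) (hn : 2 ≤ n) (hk : 1 ≤ k) (hkn : k * k ≤ n) :
    (1/20) * (k:ℝ)^2 / (n:ℝ)^2 ≤ pathLamSecond n k
      ∧ pathLamSecond n k ≤ 24 * (k:ℝ)^2 / (n:ℝ)^2 := by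
  have h2kn : 2 * k ≤ n := two_k_le n k hn hk hkn
  have hkR : (0:ℝ) < k := by exact_mod_cast hk
  have hnR : (0:ℝ) < n := by exact_mod_cast (by omega : 0 < n)
  set S : Set ℝ := {r | ∃ x : Fin n → ℝ, x ≠ 0 ∧ (∑ i, x i * Real.sqrt (pathDeg n k i)) = 0 ∧
    r = (∑ i, x i * ((pathLap n k).mulVec x) i) / ∑ i, x i ^ 2} with hS
  have hlam : pathLamSecond n k = sInf S := rfl
  set r0 : ℝ := (∑ i, xtest n k i * ((pathLap n k).mulVec (xtest n k)) i)
      / ∑ i, xtest n k i ^ 2 with hr0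
  have hmem : r0 ∈ S := ⟨xtest n k, xtest_ne n k hn hk h2kn, xtest_constraint n k hn hk h2kn, rfl⟩
  have hlb : ∀ r ∈ S, (1/20) * (k:ℝ)^2 / (n:ℝ)^2 ≤ r := by
    rintro r ⟨x, hx, hc, rfl⟩
    exact lam_lower n k hn hk hkn x hx hc
  have hbdd : BddBelow S := ⟨(1/20) * (k:ℝ)^2 / (n:ℝ)^2, hlb⟩
  constructor
  · rw [hlam]
    exact le_csInf ⟨r0, hmem⟩ hlb
  · rw [hlam]
    have hr0le : r0 ≤ 24 * (k:ℝ)^2 / (n:ℝ)^2 := by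
      rw [hr0, quad_form n k hk h2kn]
      have hX : (k:ℝ) * (n:ℝ)^3 / 24 ≤ ∑ i, xtest n k i ^ 2 := xtest_norm n k hn hk h2kn
      have hXpos : (0:ℝ) < ∑ i, xtest n k i ^ 2 := lt_of_lt_of_le (by positivity) hX
      have hQ : Qz n k (zfun n k (xtest n k)) ≤ (n:ℝ) * (k:ℝ)^3 :=
        xtest_energy n k hn hk h2kn
      rw [div_le_div_iff₀ hXpos (by positivity)]
      have h1 : Qz n k (zfun n k (xtest n k)) * (n:ℝ)^2 ≤ ((n:ℝ) * (k:ℝ)^3) * (n:ℝ)^2 :=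
        mul_le_mul_of_nonneg_right hQ (by positivity)
      have h2 : 24 * (k:ℝ)^2 * ((k:ℝ) * (n:ℝ)^3 / 24) ≤ 24 * (k:ℝ)^2 * ∑ i, xtest n k i ^ 2 :=
        mul_le_mul_of_nonneg_left hX (by positivity)
      have e : ((n:ℝ) * (k:ℝ)^3) * (n:ℝ)^2 = 24 * (k:ℝ)^2 * ((k:ℝ) * (n:ℝ)^3 / 24) := by ring
      linarith
    exact le_trans (csInf_le hbdd hmem) hr0le


-- discrete IVT
lemma nat_ivt (a : ℕ → ℕ) (hlip : ∀ t, a (t+1) ≤ a t + 1) (t₁ t₂ v : ℕ) (h12 : t₁ ≤ t₂)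
    (h1 : a t₁ ≤ v) (h2 : v ≤ a t₂) : ∃ t, t₁ ≤ t ∧ t ≤ t₂ ∧ a t = v := by
  induction t₂, h12 using Nat.le_induction with
  | base => exact ⟨t₁, le_refl _, le_refl _, le_antisymm h1 h2⟩
  | succ m hm ih =>
    by_cases h : v ≤ a m
    · obtain ⟨t, ht1, ht2, ht3⟩ := ih h
      exact ⟨t, ht1, by omega, ht3⟩
    · have := hlip m
      exact ⟨m+1, by omega, le_refl _, by omega⟩

lemma nat_min_mul (a b K : ℕ) (hab : a + b = K) : K * min a b ≤ 2 * (a * b) := by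
  rcases le_total a b with h | h
  · rw [min_eq_left h]; nlinarith
  · rw [min_eq_right h]; nlinarith


def winCount (n k : ℕ) (A : Finset (Fin n)) (t : ℕ) : ℕ :=
  (A.filter (fun i => t ≤ i.val ∧ i.val ≤ t + k)).card

def cutN (n k : ℕ) (S : Finset (Fin n)) : ℕ :=
  ∑ i ∈ S, ∑ j ∈ Sᶜ, (if i.val ≠ j.val ∧ i.val ≤ j.val + k ∧ j.val ≤ i.val + k then 1 else 0)

lemma winCount_add (n k : ℕ) (S : Finset (Fin n)) (t : ℕ) (ht : t + k < n) :
    winCount n k S t + winCount n k Sᶜ t = k + 1 := by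
  unfold winCount
  rw [← Finset.card_union_of_disjoint
    (Finset.disjoint_filter_filter disjoint_compl_right), ← Finset.filter_union,
    Finset.union_compl]
  have : (Finset.univ.filter (fun i : Fin n => t ≤ i.val ∧ i.val ≤ t + k)).card
      = (Icc t (t+k)).card := by
    apply Finset.card_bij (fun (a : Fin n) _ => a.val)
    · intro a ha
      simp only [Finset.mem_filter, Finset.mem_univ, true_and] at ha
      simp only [Finset.mem_Icc]
      omega
    · intro a _ b _ hab
      exact Fin.ext hab
    · intro b hb
      simp only [Finset.mem_Icc] at hb
      refine ⟨⟨b, by omega⟩, ?_, rfl⟩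
      simp only [Finset.mem_filter, Finset.mem_univ, true_and]
      omega
  rw [this, Nat.card_Icc]
  omega

lemma card_val_eq_le_one (n : ℕ) (A : Finset (Fin n)) (c : ℕ) :
    (A.filter (fun i => i.val = c)).card ≤ 1 := by
  apply Finset.card_le_one.mpr
  intro a ha b hb
  simp only [Finset.mem_filter] at ha hb
  exact Fin.ext (ha.2.trans hb.2.symm)

lemma winCount_lip₁ (n k : ℕ) (A : Finset (Fin n)) (t : ℕ) :
    winCount n k A (t+1) ≤ winCount n k A t + 1 := by
  unfold winCount
  have hsub : A.filter (fun i => t+1 ≤ i.val ∧ i.val ≤ t+1+k)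
      ⊆ (A.filter (fun i => t ≤ i.val ∧ i.val ≤ t + k)) ∪ (A.filter (fun i => i.val = t+k+1)) := by
    intro i hi
    simp only [Finset.mem_filter, Finset.mem_union] at hi ⊢
    rcases Nat.lt_or_ge i.val (t+k+1) with hlt | hge
    · exact Or.inl ⟨hi.1, by omega⟩
    · exact Or.inr ⟨hi.1, by omega⟩
  calc (A.filter (fun i => t+1 ≤ i.val ∧ i.val ≤ t+1+k)).card
      ≤ ((A.filter (fun i => t ≤ i.val ∧ i.val ≤ t + k)) ∪ (A.filter (fun i => i.val = t+k+1))).card :=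
        Finset.card_le_card hsub
    _ ≤ (A.filter (fun i => t ≤ i.val ∧ i.val ≤ t + k)).card + (A.filter (fun i => i.val = t+k+1)).card :=
        Finset.card_union_le _ _
    _ ≤ (A.filter (fun i => t ≤ i.val ∧ i.val ≤ t + k)).card + 1 := by
        have := card_val_eq_le_one n A (t+k+1); omega

lemma winCount_lip₂ (n k : ℕ) (A : Finset (Fin n)) (t : ℕ) :
    winCount n k A t ≤ winCount n k A (t+1) + 1 := by
  unfold winCount
  have hsub : A.filter (fun i => t ≤ i.val ∧ i.val ≤ t+k)
      ⊆ (A.filter (fun i => t+1 ≤ i.val ∧ i.val ≤ t+1+k)) ∪ (A.filter (fun i => i.val = t)) := by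
    intro i hi
    simp only [Finset.mem_filter, Finset.mem_union] at hi ⊢
    rcases Nat.lt_or_ge i.val (t+1) with hlt | hge
    · exact Or.inr ⟨hi.1, by omega⟩
    · exact Or.inl ⟨hi.1, by omega⟩
  calc (A.filter (fun i => t ≤ i.val ∧ i.val ≤ t+k)).card
      ≤ _ := Finset.card_le_card hsub
    _ ≤ (A.filter (fun i => t+1 ≤ i.val ∧ i.val ≤ t+1+k)).card + (A.filter (fun i => i.val = t)).card :=
        Finset.card_union_le _ _
    _ ≤ (A.filter (fun i => t+1 ≤ i.val ∧ i.val ≤ t+1+k)).card + 1 := by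
        have := card_val_eq_le_one n A t; omega

lemma winCount_total (n k : ℕ) (hk1n : k + 1 ≤ n) (A : Finset (Fin n)) :
    A.card ≤ ∑ t ∈ range (n-k), winCount n k A t := by
  unfold winCount
  have hrw : ∀ t, (A.filter (fun i => t ≤ i.val ∧ i.val ≤ t + k)).card
      = ∑ i ∈ A, if t ≤ i.val ∧ i.val ≤ t + k then 1 else 0 := fun t => Finset.card_filter _ _
  rw [Finset.sum_congr rfl (fun t _ => hrw t), Finset.sum_comm]
  have hpt : ∀ i ∈ A, 1 ≤ ∑ t ∈ range (n-k), if t ≤ i.val ∧ i.val ≤ t + k then 1 else 0 := by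
    intro i _
    have hiv : i.val < n := i.isLt
    have hmem : min i.val (n-k-1) ∈ range (n-k) := by simp only [Finset.mem_range]; omega
    have hval : (if min i.val (n-k-1) ≤ i.val ∧ i.val ≤ min i.val (n-k-1) + k then 1 else 0) = 1 :=
      if_pos (by omega)
    have hle := Finset.single_le_sum
      (f := fun t => if t ≤ i.val ∧ i.val ≤ t + k then (1:ℕ) else 0)
      (fun t _ => Nat.zero_le _) hmem
    rw [hval] at hle
    exact hle
  calc A.card = ∑ _i ∈ A, 1 := by simp
    _ ≤ ∑ i ∈ A, ∑ t ∈ range (n-k), if t ≤ i.val ∧ i.val ≤ t + k then 1 else 0 :=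
        Finset.sum_le_sum hpt

lemma prod_le_cut (n k : ℕ) (S : Finset (Fin n)) :
    ∑ t ∈ range (n-k), winCount n k S t * winCount n k Sᶜ t ≤ (k+1) * cutN n k S := by
  have hexp : ∀ t, winCount n k S t * winCount n k Sᶜ t
      = ∑ i ∈ S, ∑ j ∈ Sᶜ, (if t ≤ i.val ∧ i.val ≤ t + k then 1 else 0)
          * (if t ≤ j.val ∧ j.val ≤ t + k then 1 else 0) := by
    intro t
    unfold winCount
    rw [Finset.card_filter, Finset.card_filter, Finset.sum_mul_sum]
  rw [Finset.sum_congr rfl (fun t _ => hexp t), Finset.sum_comm]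
  unfold cutN
  rw [Finset.mul_sum]
  apply Finset.sum_le_sum
  intro i hiS
  rw [Finset.sum_comm, Finset.mul_sum]
  apply Finset.sum_le_sum
  intro j hjS
  have hne : i.val ≠ j.val := by
    intro he
    rw [Finset.mem_compl] at hjS
    exact hjS (by rwa [Fin.ext he] at hiS)
  by_cases hadj : i.val ≠ j.val ∧ i.val ≤ j.val + k ∧ j.val ≤ i.val + k
  · rw [if_pos hadj, mul_one]
    calc ∑ t ∈ range (n-k), (if t ≤ i.val ∧ i.val ≤ t + k then 1 else 0)
          * (if t ≤ j.val ∧ j.val ≤ t + k then 1 else 0)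
        ≤ ∑ t ∈ range (n-k), if i.val - k ≤ t ∧ t ≤ i.val then 1 else 0 := by
          apply Finset.sum_le_sum
          intro t _
          split_ifs with h1 h2 h3 h4 h5 <;> omega
      _ = ((range (n-k)).filter (fun t => i.val - k ≤ t ∧ t ≤ i.val)).card :=
          (Finset.card_filter _ _).symm
      _ ≤ (Icc (i.val - k) i.val).card := by
          apply Finset.card_le_card
          intro t ht
          simp only [Finset.mem_filter, Finset.mem_range] at ht
          simp only [Finset.mem_Icc]
          omega
      _ ≤ k + 1 := by rw [Nat.card_Icc]; omega
  · rw [if_neg hadj, mul_zero]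
    apply le_of_eq
    apply Finset.sum_eq_zero
    intro t _
    split_ifs with h1 h2 <;> first | rfl | omega

lemma min_le_two_cut (n k : ℕ) (S : Finset (Fin n)) :
    ∑ t ∈ range (n-k), min (winCount n k S t) (winCount n k Sᶜ t) ≤ 2 * cutN n k S := by
  have h1 : (k+1) * ∑ t ∈ range (n-k), min (winCount n k S t) (winCount n k Sᶜ t)
      ≤ 2 * ((k+1) * cutN n k S) := by
    rw [Finset.mul_sum]
    calc ∑ t ∈ range (n-k), (k+1) * min (winCount n k S t) (winCount n k Sᶜ t)
        ≤ ∑ t ∈ range (n-k), 2 * (winCount n k S t * winCount n k Sᶜ t) := by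
          apply Finset.sum_le_sum
          intro t ht
          simp only [Finset.mem_range] at ht
          exact nat_min_mul _ _ _ (winCount_add n k S t (by omega))
      _ = 2 * ∑ t ∈ range (n-k), winCount n k S t * winCount n k Sᶜ t := by
          rw [Finset.mul_sum]
      _ ≤ 2 * ((k+1) * cutN n k S) :=
          Nat.mul_le_mul_left 2 (prod_le_cut n k S)
  have h2 : 2 * ((k+1) * cutN n k S) = (k+1) * (2 * cutN n k S) := by ring
  rw [h2] at h1
  exact Nat.le_of_mul_le_mul_left h1 (by omega)

lemma sum_min_ge (n k : ℕ) (hn : 2 ≤ n) (hk : 1 ≤ k) (hkn : k * k ≤ n) (hk1n : k + 1 ≤ n)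
    (S : Finset (Fin n)) (hS : S.Nonempty) (hSc : Sᶜ.Nonempty) :
    k * k * min S.card Sᶜ.card
      ≤ 9 * n * ∑ t ∈ range (n-k), min (winCount n k S t) (winCount n k Sᶜ t) := by
  classical
  set a : ℕ → ℕ := winCount n k S with ha
  set b : ℕ → ℕ := winCount n k Sᶜ with hb
  have hab : ∀ t ∈ range (n-k), a t + b t = k + 1 := by
    intro t ht
    simp only [Finset.mem_range] at ht
    exact winCount_add n k S t (by omega)
  have hcardn : min S.card Sᶜ.card ≤ n := by
    have := Finset.card_le_univ S
    simp only [Finset.card_univ, Fintype.card_fin] at this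
    omega
  by_cases hI : ∀ t ∈ range (n-k), k + 1 ≤ 3 * a t
  · -- sum of b is at least |Sᶜ|
    have hpt : ∀ t ∈ range (n-k), b t ≤ 3 * min (a t) (b t) := by
      intro t ht
      have h1 := hI t ht
      have h2 := hab t ht
      rcases le_total (a t) (b t) with h | h
      · rw [min_eq_left h]; omega
      · rw [min_eq_right h]; omega
    have hsum : Sᶜ.card ≤ 3 * ∑ t ∈ range (n-k), min (a t) (b t) := by
      calc Sᶜ.card ≤ ∑ t ∈ range (n-k), b t := winCount_total n k hk1n Sᶜ
        _ ≤ ∑ t ∈ range (n-k), 3 * min (a t) (b t) := Finset.sum_le_sum hpt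
        _ = 3 * ∑ t ∈ range (n-k), min (a t) (b t) := by rw [Finset.mul_sum]
    calc k * k * min S.card Sᶜ.card ≤ n * Sᶜ.card :=
          Nat.mul_le_mul hkn (min_le_right _ _)
      _ ≤ n * (3 * ∑ t ∈ range (n-k), min (a t) (b t)) := Nat.mul_le_mul_left n hsum
      _ ≤ 9 * n * ∑ t ∈ range (n-k), min (a t) (b t) := by ring_nf; omega
  by_cases hII : ∀ t ∈ range (n-k), k + 1 ≤ 3 * b t
  · have hpt : ∀ t ∈ range (n-k), a t ≤ 3 * min (a t) (b t) := by
      intro t ht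
      have h1 := hII t ht
      have h2 := hab t ht
      rcases le_total (a t) (b t) with h | h
      · rw [min_eq_left h]; omega
      · rw [min_eq_right h]; omega
    have hsum : S.card ≤ 3 * ∑ t ∈ range (n-k), min (a t) (b t) := by
      calc S.card ≤ ∑ t ∈ range (n-k), a t := winCount_total n k hk1n S
        _ ≤ ∑ t ∈ range (n-k), 3 * min (a t) (b t) := Finset.sum_le_sum hpt
        _ = 3 * ∑ t ∈ range (n-k), min (a t) (b t) := by rw [Finset.mul_sum]
    calc k * k * min S.card Sᶜ.card ≤ n * S.card :=
          Nat.mul_le_mul hkn (min_le_left _ _)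
      _ ≤ n * (3 * ∑ t ∈ range (n-k), min (a t) (b t)) := Nat.mul_le_mul_left n hsum
      _ ≤ 9 * n * ∑ t ∈ range (n-k), min (a t) (b t) := by ring_nf; omega
  -- case III
  push_neg at hI hII
  obtain ⟨t₁, ht₁r, ht₁⟩ := hI
  obtain ⟨t₂, ht₂r, ht₂⟩ := hII
  set q : ℕ := (k+3)/3 with hq
  set r : ℕ := k + 1 - q with hr
  have hq3 : k + 1 ≤ 3 * q ∧ 3 * q ≤ k + 3 ∧ q ≤ r ∧ k ≤ 3 * q ∧ k ≤ 3 * (r + 1 - q) := by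
    constructor
    · omega
    constructor
    · omega
    constructor
    · omega
    constructor
    · omega
    · omega
  have hat₁ : a t₁ ≤ q := by omega
  have hat₂ : r ≤ a t₂ := by
    have h2 := hab t₂ ht₂r
    omega
  have hlipa : ∀ t, a (t+1) ≤ a t + 1 := fun t => winCount_lip₁ n k S t
  have hlipb : ∀ t, b (t+1) ≤ b t + 1 := fun t => winCount_lip₁ n k Sᶜ t
  have band : ∀ v, q ≤ v → v ≤ r → ∃ t, t ∈ range (n-k) ∧ a t = v := by
    intro v hv1 hv2
    rcases le_total t₁ t₂ with h12 | h21
    · obtain ⟨t, h1, h2, h3⟩ := nat_ivt a hlipa t₁ t₂ v h12 (by omega) (by omega)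
      refine ⟨t, ?_, h3⟩
      simp only [Finset.mem_range] at ht₂r ⊢
      omega
    · have hbt₂ : b t₂ ≤ k + 1 - v := by omega
      have hbt₁ : k + 1 - v ≤ b t₁ := by
        have h2 := hab t₁ ht₁r
        omega
      obtain ⟨t, h1, h2, h3⟩ := nat_ivt b hlipb t₂ t₁ (k+1-v) h21 hbt₂ hbt₁
      refine ⟨t, ?_, ?_⟩
      · simp only [Finset.mem_range] at ht₁r ⊢
        omega
      · have habt : a t + b t = k + 1 := by
          apply hab
          simp only [Finset.mem_range] at ht₁r ⊢
          omega
        omega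
  -- choice function
  set g : ℕ → ℕ := fun v => if h : ∃ t, t ∈ range (n-k) ∧ a t = v then h.choose else 0 with hg
  have hgspec : ∀ v ∈ Icc q r, g v ∈ range (n-k) ∧ a (g v) = v := by
    intro v hv
    simp only [Finset.mem_Icc] at hv
    have hex := band v hv.1 hv.2
    simp only [hg, dif_pos hex]
    exact hex.choose_spec
  have hinj : Set.InjOn g (Icc q r) := by
    intro v1 h1 v2 h2 he
    have s1 := (hgspec v1 (by simpa using h1)).2
    have s2 := (hgspec v2 (by simpa using h2)).2
    rw [he] at s1
    omega
  have himg : (Icc q r).image g ⊆ range (n-k) := by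
    intro t ht
    obtain ⟨v, hv, rfl⟩ := Finset.mem_image.mp ht
    exact (hgspec v hv).1
  have hkey : (r + 1 - q) * q ≤ ∑ t ∈ range (n-k), min (a t) (b t) := by
    calc (r + 1 - q) * q = ∑ _v ∈ Icc q r, q := by
          rw [Finset.sum_const, Nat.card_Icc, smul_eq_mul]
      _ ≤ ∑ v ∈ Icc q r, min (a (g v)) (b (g v)) := by
          apply Finset.sum_le_sum
          intro v hv
          obtain ⟨hgr, hgv⟩ := hgspec v hv
          simp only [Finset.mem_Icc] at hv
          have habg := hab (g v) hgr
          apply le_min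
          · omega
          · omega
      _ = ∑ t ∈ (Icc q r).image g, min (a t) (b t) := by
          rw [Finset.sum_image]
          intro v1 h1 v2 h2 he
          exact hinj h1 h2 he
      _ ≤ ∑ t ∈ range (n-k), min (a t) (b t) := Finset.sum_le_sum_of_subset himg
  calc k * k * min S.card Sᶜ.card ≤ (k * k) * n := Nat.mul_le_mul_left _ hcardn
    _ ≤ (3 * (r + 1 - q) * (3 * q)) * n := by
        apply Nat.mul_le_mul_right
        have := Nat.mul_le_mul hq3.2.2.2.2 hq3.2.2.2.1
        omega
    _ = 9 * ((r + 1 - q) * q) * n := by ring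
    _ ≤ 9 * (∑ t ∈ range (n-k), min (a t) (b t)) * n := by
        apply Nat.mul_le_mul_right
        exact Nat.mul_le_mul_left 9 hkey
    _ = 9 * n * ∑ t ∈ range (n-k), min (a t) (b t) := by ring


lemma cut_cast (n k : ℕ) (S : Finset (Fin n)) :
    (∑ i ∈ S, ∑ j ∈ Sᶜ, pathAdj n k i j) = (cutN n k S : ℝ) := by
  unfold cutN
  push_cast
  apply Finset.sum_congr rfl
  intro i _
  apply Finset.sum_congr rfl
  intro j _
  rw [adj_eq]

lemma vol_le (n k : ℕ) (A : Finset (Fin n)) :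
    ∑ i ∈ A, pathDeg n k i ≤ 2 * (k:ℝ) * A.card := by
  calc ∑ i ∈ A, pathDeg n k i ≤ ∑ _i ∈ A, 2 * (k:ℝ) :=
        Finset.sum_le_sum (fun i _ => deg_le n k i)
    _ = 2 * (k:ℝ) * A.card := by rw [Finset.sum_const, nsmul_eq_mul]; ring

lemma vol_ge (n k : ℕ) (hk : 1 ≤ k) (h2kn : 2 * k ≤ n) (A : Finset (Fin n)) :
    (k:ℝ) * A.card ≤ ∑ i ∈ A, pathDeg n k i := by
  calc (k:ℝ) * A.card = ∑ _i ∈ A, (k:ℝ) := by rw [Finset.sum_const, nsmul_eq_mul]; ring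
    _ ≤ ∑ i ∈ A, pathDeg n k i := Finset.sum_le_sum (fun i _ => deg_ge n k hk h2kn i)

lemma cheeger_lower (n k : ℕ) (hn : 2 ≤ n) (hk : 1 ≤ k) (hkn : k * k ≤ n) :
    (1/36) * (k:ℝ) / (n:ℝ) ≤ pathCheeger n k := by
  have h2kn : 2 * k ≤ n := two_k_le n k hn hk hkn
  have hk1n : k + 1 ≤ n := by omega
  have hkR : (0:ℝ) < k := by exact_mod_cast hk
  have hnR : (0:ℝ) < n := by exact_mod_cast (by omega : 0 < n)
  apply le_csInf
  · refine ⟨_, ⟨{⟨0, by omega⟩}, Finset.singleton_nonempty _, ⟨⟨1, by omega⟩, ?_⟩, rfl⟩⟩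
    rw [Finset.mem_compl, Finset.mem_singleton]
    intro h
    have := congrArg Fin.val h
    simp at this
  · rintro r ⟨S, hS, hSc, rfl⟩
    set m : ℕ := min S.card Sᶜ.card with hm
    have hm1 : 1 ≤ m := by
      have h1 := Finset.Nonempty.card_pos hS
      have h2 := Finset.Nonempty.card_pos hSc
      omega
    have hmR : (1:ℝ) ≤ (m:ℝ) := by exact_mod_cast hm1
    -- cut lower bound
    have hcutN : k * k * m ≤ 18 * n * cutN n k S := by
      have h1 := sum_min_ge n k hn hk hkn hk1n S hS hSc
      have h2 := min_le_two_cut n k S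
      calc k * k * m ≤ 9 * n * ∑ t ∈ range (n-k), min (winCount n k S t) (winCount n k Sᶜ t) := h1
        _ ≤ 9 * n * (2 * cutN n k S) := Nat.mul_le_mul_left _ h2
        _ = 18 * n * cutN n k S := by ring
    have hcut : (k:ℝ)^2 * m ≤ 18 * n * (∑ i ∈ S, ∑ j ∈ Sᶜ, pathAdj n k i j) := by
      rw [cut_cast]
      have : ((k * k * m : ℕ) : ℝ) ≤ ((18 * n * cutN n k S : ℕ) : ℝ) := by exact_mod_cast hcutN
      push_cast at this
      nlinarith [this]
    have hcut0 : (0:ℝ) ≤ ∑ i ∈ S, ∑ j ∈ Sᶜ, pathAdj n k i j := by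
      rw [cut_cast]; positivity
    -- volume bounds
    have hvolpos : (0:ℝ) < min (∑ i ∈ S, pathDeg n k i) (∑ i ∈ Sᶜ, pathDeg n k i) := by
      apply lt_min
      · calc (0:ℝ) < (k:ℝ) * S.card := by
              have : (0:ℝ) < (S.card:ℝ) := by exact_mod_cast Finset.Nonempty.card_pos hS
              positivity
          _ ≤ _ := vol_ge n k hk h2kn S
      · calc (0:ℝ) < (k:ℝ) * Sᶜ.card := by
              have : (0:ℝ) < (Sᶜ.card:ℝ) := by exact_mod_cast Finset.Nonempty.card_pos hSc
              positivity
          _ ≤ _ := vol_ge n k hk h2kn Sᶜ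
    have hvol : min (∑ i ∈ S, pathDeg n k i) (∑ i ∈ Sᶜ, pathDeg n k i) ≤ 2 * (k:ℝ) * m := by
      rcases le_total S.card Sᶜ.card with h | h
      · have hmeq : m = S.card := by omega
        calc min (∑ i ∈ S, pathDeg n k i) (∑ i ∈ Sᶜ, pathDeg n k i)
            ≤ ∑ i ∈ S, pathDeg n k i := min_le_left _ _
          _ ≤ 2 * (k:ℝ) * S.card := vol_le n k S
          _ = 2 * (k:ℝ) * m := by rw [hmeq]
      · have hmeq : m = Sᶜ.card := by omega
        calc min (∑ i ∈ S, pathDeg n k i) (∑ i ∈ Sᶜ, pathDeg n k i)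
            ≤ ∑ i ∈ Sᶜ, pathDeg n k i := min_le_right _ _
          _ ≤ 2 * (k:ℝ) * Sᶜ.card := vol_le n k Sᶜ
          _ = 2 * (k:ℝ) * m := by rw [hmeq]
    rw [le_div_iff₀ hvolpos]
    calc (1/36) * (k:ℝ) / (n:ℝ) * min (∑ i ∈ S, pathDeg n k i) (∑ i ∈ Sᶜ, pathDeg n k i)
        ≤ (1/36) * (k:ℝ) / (n:ℝ) * (2 * (k:ℝ) * m) :=
          mul_le_mul_of_nonneg_left hvol (by positivity)
      _ = (k:ℝ)^2 * m / (18 * n) := by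
          field_simp
          ring
      _ ≤ ∑ i ∈ S, ∑ j ∈ Sᶜ, pathAdj n k i j := by
          rw [div_le_iff₀ (by positivity)]
          linarith

end KPath3

/-- For the k-connected path on n nodes with `k ≤ √n`,
`λ_{n−1}(L) = Θ(k²/n²)`; in particular the Cheeger constant satisfies
`h_G = Ω(k/n)`. -/
theorem kPath_lambda_theta :
    ∃ c₁ c₂ c₃ : ℝ, 0 < c₁ ∧ 0 < c₂ ∧ 0 < c₃ ∧
      ∀ n k : ℕ, 2 ≤ n → 1 ≤ k → k * k ≤ n →
        c₁ * k ^ 2 / n ^ 2 ≤ pathLamSecond n k ∧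
        pathLamSecond n k ≤ c₂ * k ^ 2 / n ^ 2 ∧
        c₃ * k / n ≤ pathCheeger n k := by
  refine ⟨1/20, 24, 1/36, by norm_num, by norm_num, by norm_num, ?_⟩
  intro n k hn hk hkn
  obtain ⟨h1, h2⟩ := KPath3.lamSecond_bounds n k hn hk hkn
  exact ⟨h1, h2, KPath3.cheeger_lower n k hn hk hkn⟩
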